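/- Assume (G) and (L), and additionally that ‖L(x)‖ ≤ R0 whenever ‖x‖ ≤ 1. Suppose there exist reals 0 < s ≤ t < 1 and a compact connected set Γ ⊆ { x ∈ ℝ^m : s ≤ ‖x‖ ≤ t } such that 0 does not lie in the unbounded component of ℝ^m \ Γ, and suppose there exists j0 ∈ ℕ with ‖f^{j0}(L(x))‖ > R0 for all x ∈ Γ. Let μ > (log d + log K)/(log d − log K). Then there exists R3 > 0 such that for every r > R3 there is an integer ℓ ≥ 1 for which the scaled set Γ^r = { 2^ℓ · x : x ∈ Γ } satisfies: Γ^r ⊆ { x : r < ‖x‖ ≤ r^μ }, 0 does not lie in the unbounded component of ℝ^m \ Γ^r, and min_{x ∈ Γ^r} ‖L(x)‖ > M(r,L). -/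

import Mathlib

set_option maxHeartbeats 1000000


/-- The maximum modulus `M(r,g) = max_{‖x‖ = r} ‖g(x)‖` (as a supremum). -/
noncomputable def maxMod {m : ℕ} (g : EuclideanSpace ℝ (Fin m) → EuclideanSpace ℝ (Fin m))
    (r : ℝ) : ℝ :=
  sSup ((fun x => ‖g x‖) '' {x : EuclideanSpace ℝ (Fin m) | ‖x‖ = r})

/-- Lemma 7.3 of the paper (minimum modulus growth): for every `r > R3` there is a scaled
copy `Γ^r = 2^ℓ Γ` of the separating continuum `Γ`, lying in the annulus `r < ‖x‖ ≤ r^μ`,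
separating `0` from infinity, on which `‖L‖` exceeds `M(r,L)`. -/
theorem min_modulus_on_continuum {m : ℕ} (hm : 2 ≤ m) (d K : ℝ) (hK : 1 ≤ K) (hdK : K < d)
    (a b : ℝ) (ha : a = (d / K) ^ ((1 : ℝ) / ((m : ℝ) - 1)))
    (hb : b = (d * K) ^ ((1 : ℝ) / ((m : ℝ) - 1)))
    (R0 C1 C2 : ℝ) (hR0 : 1 ≤ R0) (hC1 : 0 < C1) (hC2 : 1 ≤ C2)
    (hbig : 1 < C1 * R0 ^ (a - 1))
    (f L : EuclideanSpace ℝ (Fin m) → EuclideanSpace ℝ (Fin m))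
    (hlow : ∀ y : EuclideanSpace ℝ (Fin m), R0 < ‖y‖ → C1 * ‖y‖ ^ a ≤ ‖f y‖)
    (hup : ∀ y : EuclideanSpace ℝ (Fin m), ‖f y‖ ≤ C2 * (max ‖y‖ R0) ^ b)
    (hLcont : Continuous L)
    (hfunc : ∀ x : EuclideanSpace ℝ (Fin m), f (L x) = L ((2 : ℝ) • x))
    (hLsmall : ∀ x : EuclideanSpace ℝ (Fin m), ‖x‖ ≤ 1 → ‖L x‖ ≤ R0)
    (s t : ℝ) (hs : 0 < s) (hst : s ≤ t) (ht : t < 1)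
    (Γ : Set (EuclideanSpace ℝ (Fin m)))
    (hΓcompact : IsCompact Γ) (hΓconn : IsConnected Γ)
    (hΓann : Γ ⊆ {x : EuclideanSpace ℝ (Fin m) | s ≤ ‖x‖ ∧ ‖x‖ ≤ t})
    (hΓsep : Bornology.IsBounded (connectedComponentIn Γᶜ 0))
    (hesc : ∃ j0 : ℕ, ∀ x ∈ Γ, R0 < ‖f^[j0] (L x)‖)
    (μ : ℝ) (hμ : (Real.log d + Real.log K) / (Real.log d - Real.log K) < μ) :
    ∃ R3 : ℝ, 0 < R3 ∧ ∀ r : ℝ, R3 < r → ∃ ℓ : ℕ, 1 ≤ ℓ ∧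
      (fun x => ((2 : ℝ) ^ ℓ) • x) '' Γ ⊆
        {x : EuclideanSpace ℝ (Fin m) | r < ‖x‖ ∧ ‖x‖ ≤ r ^ μ} ∧
      Bornology.IsBounded
        (connectedComponentIn ((fun x => ((2 : ℝ) ^ ℓ) • x) '' Γ)ᶜ 0) ∧
      ∀ x ∈ (fun x => ((2 : ℝ) ^ ℓ) • x) '' Γ, maxMod L r < ‖L x‖ := by
  classical
  obtain ⟨j0, hesc⟩ := hesc
  -- basic facts about the exponents
  have hm1 : (1:ℝ) ≤ (m:ℝ) - 1 := by
    have : (2:ℝ) ≤ (m:ℝ) := by exact_mod_cast hm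
    linarith
  have he : 0 < (1:ℝ) / ((m:ℝ) - 1) := by positivity
  have hK0 : (0:ℝ) < K := by linarith
  have hd1 : (1:ℝ) < d := lt_of_le_of_lt hK hdK
  have hd0 : (0:ℝ) < d := by linarith
  have ha1 : 1 < a := by
    have hdk1 : 1 < d / K := (one_lt_div hK0).mpr hdK
    rw [ha]
    exact (Real.one_lt_rpow_iff_of_pos (by linarith)).mpr (Or.inl ⟨hdk1, he⟩)
  have hb1 : 1 < b := by
    have hdk1 : 1 < d * K := by
      have h := mul_le_mul_of_nonneg_left hK hd0.le
      rw [mul_one] at h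
      linarith
    rw [hb]
    exact (Real.one_lt_rpow_iff_of_pos (by linarith)).mpr (Or.inl ⟨hdk1, he⟩)
  have ha0 : (0:ℝ) < a := by linarith
  have hb0 : (0:ℝ) < b := by linarith
  have hab : a ≤ b := by
    rw [ha, hb]
    refine Real.rpow_le_rpow (by positivity) ?_ he.le
    rw [div_le_iff₀ hK0]
    have hKK : (1:ℝ) * 1 ≤ K * K := mul_le_mul hK hK zero_le_one hK0.le
    rw [one_mul] at hKK
    have h := mul_le_mul_of_nonneg_left hKK hd0.le
    rw [mul_one] at h
    linarith [h, (mul_assoc d K K).symm ▸ h]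
  -- the ratio ρ = log b / log a
  have hloga : Real.log a = (1/((m:ℝ)-1)) * (Real.log d - Real.log K) := by
    rw [ha, Real.log_rpow (by positivity), Real.log_div hd0.ne' hK0.ne']
  have hlogb : Real.log b = (1/((m:ℝ)-1)) * (Real.log d + Real.log K) := by
    rw [hb, Real.log_rpow (by positivity), Real.log_mul hd0.ne' hK0.ne']
  have hρeq : Real.log b / Real.log a
      = (Real.log d + Real.log K) / (Real.log d - Real.log K) := by
    rw [hloga, hlogb, mul_div_mul_left _ _ (by positivity : (0:ℝ) < 1/((m:ℝ)-1)).ne']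
  have hloga0 : 0 < Real.log a := Real.log_pos ha1
  have hlogb0 : 0 < Real.log b := Real.log_pos hb1
  have hμρ : Real.log b / Real.log a < μ := by rw [hρeq]; exact hμ
  have hρ1 : 1 ≤ Real.log b / Real.log a := by
    rw [le_div_iff₀ hloga0, one_mul]
    exact (Real.log_le_log_iff ha0 hb0).mpr hab
  set ν : ℝ := (Real.log b / Real.log a + μ) / 2 with hνdef
  have hν1 : 1 < ν := by rw [hνdef]; linarith
  have hν0 : 0 < ν := by linarith
  have hνμ : ν < μ := by rw [hνdef]; linarith
  have hνρ : Real.log b / Real.log a < ν := by rw [hνdef]; linarith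
  have hlog2 : (0:ℝ) < Real.log 2 := Real.log_pos one_lt_two
  set α' : ℝ := Real.log a / Real.log 2 with hα'def
  set β' : ℝ := Real.log b / Real.log 2 with hβ'def
  have hα'0 : 0 < α' := by positivity
  have hβ'0 : 0 < β' := by positivity
  have hνα : β' < ν * α' := by
    have h1 : Real.log b < ν * Real.log a := (div_lt_iff₀ hloga0).mp hνρ
    rw [hβ'def, hα'def, show ν * (Real.log a / Real.log 2) = (ν * Real.log a) / Real.log 2
      from by ring]
    exact (div_lt_div_iff_of_pos_right hlog2).mpr h1
  -- the constants ε, η and the bases c, η·R0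
  have hapos : (0:ℝ) < a - 1 := by linarith
  have hbpos : (0:ℝ) < b - 1 := by linarith
  set ε : ℝ := C1 ^ ((1:ℝ)/(a-1)) with hεdef
  have hε0 : 0 < ε := Real.rpow_pos_of_pos hC1 _
  have hεa : ε ^ (a-1) = C1 := by
    rw [hεdef, ← Real.rpow_mul hC1.le, one_div, inv_mul_cancel₀ hapos.ne', Real.rpow_one]
  set c : ℝ := ε * R0 with hcdef
  have hc0 : 0 < c := by positivity
  have hc1 : 1 < c := by
    have hcr : c ^ (a-1) = C1 * R0 ^ (a-1) := by
      rw [hcdef, Real.mul_rpow hε0.le (by linarith), hεa]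
    rcases (Real.one_lt_rpow_iff_of_pos hc0).mp (hcr ▸ hbig) with ⟨h1, _⟩ | ⟨_, h2⟩
    · exact h1
    · linarith
  have hεc : ε⁻¹ * c = R0 := by rw [hcdef]; field_simp
  set η : ℝ := C2 ^ ((1:ℝ)/(b-1)) with hηdef
  have hη1 : 1 ≤ η := Real.one_le_rpow hC2 (by positivity)
  have hη0 : 0 < η := by linarith
  have hηb : η ^ (b-1) = C2 := by
    rw [hηdef, ← Real.rpow_mul (by linarith : (0:ℝ) ≤ C2), one_div,
      inv_mul_cancel₀ hbpos.ne', Real.rpow_one]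
  have hCb1 : 1 ≤ η * R0 := by
    have h : (1:ℝ) * 1 ≤ η * R0 := mul_le_mul hη1 hR0 zero_le_one hη0.le
    linarith
  have hCb0 : 0 < η * R0 := by positivity
  -- the functional equation iterated
  have hiterL : ∀ (ℓ : ℕ) (x : EuclideanSpace ℝ (Fin m)),
      L (((2:ℝ)^ℓ) • x) = f^[ℓ] (L x) := by
    intro ℓ
    induction ℓ with
    | zero => intro x; simp
    | succ k ih =>
      intro x
      rw [Function.iterate_succ_apply, hfunc, ← ih ((2:ℝ) • x), smul_smul, ← pow_succ]
  -- the upper growth estimate for iterates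
  have hUP : ∀ (k : ℕ) (y : EuclideanSpace ℝ (Fin m)), ‖y‖ ≤ R0 →
      ‖f^[k] y‖ ≤ η⁻¹ * ((η * R0) ^ ((b:ℝ)^k : ℝ)) := by
    intro k
    induction k with
    | zero =>
      intro y hy
      simpa [Real.rpow_one, inv_mul_cancel_left₀ hη0.ne'] using hy
    | succ k ih =>
      intro y hy
      have hbk1 : (1:ℝ) ≤ b ^ k := one_le_pow₀ hb1.le
      have hBge : R0 ≤ η⁻¹ * (η * R0) ^ ((b:ℝ)^k : ℝ) := by
        have h1 : (η * R0 : ℝ) ^ (1:ℝ) ≤ (η * R0) ^ ((b:ℝ)^k : ℝ) :=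
          Real.rpow_le_rpow_of_exponent_le hCb1 hbk1
        rw [Real.rpow_one] at h1
        calc R0 = η⁻¹ * (η * R0) := by field_simp
          _ ≤ η⁻¹ * (η * R0) ^ ((b:ℝ)^k : ℝ) :=
              mul_le_mul_of_nonneg_left h1 (by positivity)
      calc ‖f^[k+1] y‖ = ‖f (f^[k] y)‖ := by rw [Function.iterate_succ_apply']
        _ ≤ C2 * (max ‖f^[k] y‖ R0) ^ b := hup _
        _ ≤ C2 * (η⁻¹ * (η * R0) ^ ((b:ℝ)^k : ℝ)) ^ b := by
            apply mul_le_mul_of_nonneg_left _ (by linarith)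
            exact Real.rpow_le_rpow (le_max_of_le_right (by linarith))
              (max_le (ih y hy) hBge) (by linarith)
        _ = η⁻¹ * (η * R0) ^ ((b:ℝ)^(k+1) : ℝ) := by
            rw [Real.mul_rpow (by positivity) (by positivity),
                Real.inv_rpow hη0.le, ← Real.rpow_mul (by positivity : (0:ℝ) ≤ η * R0),
                ← pow_succ]
            have hkey : C2 * (η ^ b)⁻¹ = η⁻¹ := by
              rw [← hηb, ← Real.rpow_neg hη0.le b, ← Real.rpow_add hη0]
              have : b - 1 + -b = (-1 : ℝ) := by ring
              rw [this, Real.rpow_neg_one]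
            rw [← mul_assoc, hkey]
  -- the lower growth estimate along the orbit of Γ
  have hLOW : ∀ (k : ℕ) (x : EuclideanSpace ℝ (Fin m)), x ∈ Γ →
      R0 < ‖f^[j0+k] (L x)‖ ∧
      ε⁻¹ * (c ^ ((a:ℝ)^k : ℝ)) ≤ ‖f^[j0+k] (L x)‖ := by
    intro k
    induction k with
    | zero =>
      intro x hx
      have hx0 := hesc x hx
      constructor
      · simpa using hx0
      · simp only [pow_zero, Real.rpow_one, Nat.add_zero, hεc]
        exact hx0.le
    | succ k ih =>
      intro x hx
      obtain ⟨hy, hA⟩ := ih x hx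
      set y := f^[j0+k] (L x) with hydef
      have hAk : (0:ℝ) < ε⁻¹ * c ^ ((a:ℝ)^k : ℝ) := by positivity
      have hstep : C1 * (ε⁻¹ * c ^ ((a:ℝ)^k : ℝ)) ^ a = ε⁻¹ * c ^ ((a:ℝ)^(k+1) : ℝ) := by
        rw [Real.mul_rpow (by positivity) (by positivity),
            Real.inv_rpow hε0.le, ← Real.rpow_mul hc0.le, ← pow_succ, ← mul_assoc]
        have hkey : C1 * (ε ^ a)⁻¹ = ε⁻¹ := by
          rw [← hεa, ← Real.rpow_neg hε0.le a, ← Real.rpow_add hε0]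
          have : a - 1 + -a = (-1 : ℝ) := by ring
          rw [this, Real.rpow_neg_one]
        rw [hkey]
      have hiter : f^[j0+(k+1)] (L x) = f y := by
        rw [hydef, show j0+(k+1) = (j0+k)+1 from rfl, Function.iterate_succ_apply']
      have hfy : ε⁻¹ * c ^ ((a:ℝ)^(k+1) : ℝ) ≤ ‖f y‖ := by
        calc ε⁻¹ * c ^ ((a:ℝ)^(k+1) : ℝ) = C1 * (ε⁻¹ * c ^ ((a:ℝ)^k : ℝ)) ^ a := hstep.symm
          _ ≤ C1 * ‖y‖ ^ a :=
              mul_le_mul_of_nonneg_left (Real.rpow_le_rpow hAk.le hA (by linarith)) hC1.le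
          _ ≤ ‖f y‖ := hlow y hy
      have hgtR0 : R0 < ε⁻¹ * c ^ ((a:ℝ)^(k+1) : ℝ) := by
        rw [← hεc]
        have h1 : (1:ℝ) < a ^ (k+1) := one_lt_pow₀ ha1 (Nat.succ_ne_zero k)
        have h2 := Real.rpow_lt_rpow_of_exponent_lt hc1 h1
        rw [Real.rpow_one] at h2
        exact mul_lt_mul_of_pos_left h2 (by positivity)
      rw [hiter]
      exact ⟨lt_of_lt_of_le hgtR0 hfy, hfy⟩
  -- bound on the maximum modulus
  have hmaxb : ∀ (n : ℕ) (r : ℝ), 0 < r → r ≤ (2:ℝ)^n →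
      maxMod L r ≤ η⁻¹ * ((η * R0) ^ ((b:ℝ)^n : ℝ)) := by
    intro n r hr hrn
    have hBpos : (0:ℝ) ≤ η⁻¹ * ((η * R0) ^ ((b:ℝ)^n : ℝ)) := by positivity
    apply Real.sSup_le _ hBpos
    rintro v ⟨x, hx, rfl⟩
    have h2n : ((2:ℝ)^n) ≠ 0 := by positivity
    have hxy : ((2:ℝ)^n) • (((2:ℝ)^n)⁻¹ • x) = x := smul_inv_smul₀ h2n x
    have hny : ‖((2:ℝ)^n)⁻¹ • x‖ ≤ 1 := by
      rw [norm_smul, norm_inv, norm_pow, Real.norm_two, hx]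
      rw [inv_mul_le_iff₀ (by positivity), mul_one]
      exact hrn
    calc ‖L x‖ = ‖f^[n] (L (((2:ℝ)^n)⁻¹ • x))‖ := by rw [← hiterL n _, hxy]
      _ ≤ η⁻¹ * ((η * R0) ^ ((b:ℝ)^n : ℝ)) := hUP n _ (hLsmall _ hny)
  -- separation is preserved by scaling
  have h0Γ : (0 : EuclideanSpace ℝ (Fin m)) ∉ Γ := by
    intro h0
    have := (hΓann h0).1
    simp at this
    linarith
  have hsepℓ : ∀ ℓ : ℕ, Bornology.IsBounded
      (connectedComponentIn ((fun x => ((2 : ℝ) ^ ℓ) • x) '' Γ)ᶜ 0) := by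
    intro ℓ
    have hcne : ((2:ℝ)^ℓ) ≠ 0 := by positivity
    set φ : EuclideanSpace ℝ (Fin m) ≃ₜ EuclideanSpace ℝ (Fin m) :=
      Homeomorph.smulOfNeZero ((2:ℝ)^ℓ) hcne with hφ
    have hφc : ⇑φ = fun x : EuclideanSpace ℝ (Fin m) => ((2:ℝ)^ℓ) • x := rfl
    have himg : (fun x : EuclideanSpace ℝ (Fin m) => ((2:ℝ)^ℓ) • x) '' Γ = φ '' Γ := by
      rw [hφc]
    have hkey := φ.image_connectedComponentIn (s := Γᶜ) (x := 0) h0Γ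
    have hφ0 : φ 0 = 0 := by simp [hφc]
    have hcompl : φ '' Γᶜ = (φ '' Γ)ᶜ := Set.image_compl_eq φ.bijective
    rw [hφ0, hcompl] at hkey
    rw [himg, ← hkey, hφc]
    simpa [← Set.image_smul] using hΓsep.smul₀ ((2:ℝ)^ℓ)
  -- asymptotic conditions, eventually in r
  set Qc : ℝ := a ^ (-(j0:ℝ)) * Real.log c with hQdef
  set Pc : ℝ := b * Real.log (η * R0) with hPdef
  have hQ0 : 0 < Qc := by
    rw [hQdef]
    exact mul_pos (Real.rpow_pos_of_pos ha0 _) (Real.log_pos hc1)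
  have hE : ∀ᶠ r : ℝ in Filter.atTop, (2:ℝ) ≤ r ∧ 1 < r^(ν-1) * s ∧ (2:ℝ) ≤ r^(μ-ν) ∧
      ((j0:ℝ)+1 ≤ ν * Real.logb 2 r) ∧
      (Real.log ε - Real.log η < Qc * r^(ν*α') - Pc * r^β') := by
    refine (Filter.eventually_ge_atTop 2).and (Filter.Eventually.and ?_
      (Filter.Eventually.and ?_ (Filter.Eventually.and ?_ ?_)))
    · exact ((tendsto_rpow_atTop (by linarith)).atTop_mul_const hs).eventually_gt_atTop 1
    · exact (tendsto_rpow_atTop (by linarith)).eventually_ge_atTop 2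
    · exact ((Real.tendsto_logb_atTop one_lt_two).const_mul_atTop hν0).eventually_ge_atTop _
    · have h1 : Filter.Tendsto (fun r:ℝ => Qc * r^(ν*α'-β') - Pc) Filter.atTop
          Filter.atTop := by
        simpa [sub_eq_add_neg] using Filter.tendsto_atTop_add_const_right Filter.atTop (-Pc)
          ((tendsto_rpow_atTop (by linarith : (0:ℝ) < ν*α'-β')).const_mul_atTop hQ0)
      have h2 : Filter.Tendsto (fun r:ℝ => Qc * r^(ν*α') - Pc * r^β') Filter.atTop
          Filter.atTop := by
        refine (((tendsto_rpow_atTop hβ'0).atTop_mul_atTop₀ h1).congr' ?_)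
        filter_upwards [Filter.eventually_gt_atTop 0] with r hr
        have h3 : r^β' * r^(ν*α'-β') = r^(ν*α') := by
          rw [← Real.rpow_add hr]; congr 1; ring
        calc r^β' * (Qc*r^(ν*α'-β') - Pc) = Qc*(r^β' * r^(ν*α'-β')) - Pc * r^β' := by ring
          _ = Qc * r^(ν*α') - Pc*r^β' := by rw [h3]
      exact h2.eventually_gt_atTop _
  obtain ⟨N, hN⟩ := Filter.eventually_atTop.mp hE
  refine ⟨max N 1, lt_of_lt_of_le one_pos (le_max_right N 1), ?_⟩
  intro r hr
  obtain ⟨hr2, hE1, hE2, hE3, hE4⟩ := hN r (le_trans (le_max_left N 1) hr.le)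
  have hr0 : (0:ℝ) < r := by linarith
  have hr1 : (1:ℝ) < r := by linarith
  set lgr : ℝ := Real.logb 2 r with hlgrdef
  have hlgr0 : 0 ≤ lgr := Real.logb_nonneg one_lt_two (by linarith)
  set n : ℕ := ⌈lgr⌉₊ with hndef
  set ℓ : ℕ := ⌈ν * lgr⌉₊ with hℓdef
  have hn1 : lgr ≤ (n:ℝ) := Nat.le_ceil _
  have hn2 : (n:ℝ) ≤ lgr + 1 := (Nat.ceil_lt_add_one hlgr0).le
  have hl1 : ν * lgr ≤ (ℓ:ℝ) := Nat.le_ceil _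
  have hl2 : (ℓ:ℝ) ≤ ν * lgr + 1 := (Nat.ceil_lt_add_one (by positivity)).le
  have hlj : j0 + 1 ≤ ℓ := by
    have h : ((j0 + 1 : ℕ) : ℝ) ≤ (ℓ : ℝ) := by push_cast; linarith
    exact_mod_cast h
  have hj0ℓ : j0 ≤ ℓ := by omega
  have h1ℓ : 1 ≤ ℓ := by omega
  -- bounds for 2^ℓ
  have hrν2ℓ : r ^ ν ≤ (2:ℝ)^ℓ := by
    calc r ^ ν = ((2:ℝ) ^ lgr) ^ ν := by
          rw [Real.rpow_logb two_pos (by norm_num) hr0]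
      _ = (2:ℝ) ^ (lgr * ν) := (Real.rpow_mul (by norm_num) _ _).symm
      _ ≤ (2:ℝ) ^ ((ℓ:ℝ)) := Real.rpow_le_rpow_of_exponent_le one_le_two
          (by rw [mul_comm]; exact hl1)
      _ = (2:ℝ)^ℓ := Real.rpow_natCast 2 ℓ
  have h2ℓrν : (2:ℝ)^ℓ ≤ 2 * r^ν := by
    calc (2:ℝ)^ℓ = (2:ℝ)^((ℓ:ℝ)) := (Real.rpow_natCast 2 ℓ).symm
      _ ≤ (2:ℝ)^(ν*lgr + 1) := Real.rpow_le_rpow_of_exponent_le one_le_two hl2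
      _ = 2 * r^ν := by
          rw [Real.rpow_add two_pos, Real.rpow_one, mul_comm ν lgr,
            Real.rpow_mul (by norm_num : (0:ℝ) ≤ 2),
            Real.rpow_logb two_pos (by norm_num) hr0]
          ring
  -- annulus containment
  have hrlt : r < (2:ℝ)^ℓ * s := by
    have h1 : r^ν * s ≤ (2:ℝ)^ℓ * s := mul_le_mul_of_nonneg_right hrν2ℓ hs.le
    have h2 : r < r^ν * s := by
      have hx : r^ν * s = (r^(ν-1) * s) * r := by
        rw [show ν = (ν-1)+1 by ring, Real.rpow_add hr0, Real.rpow_one]; ring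
      rw [hx]
      have h := mul_lt_mul_of_pos_right hE1 hr0
      rw [one_mul] at h
      exact h
    linarith
  have hup2 : (2:ℝ)^ℓ * t ≤ r^μ := by
    have h2ℓ0 : (0:ℝ) < (2:ℝ)^ℓ := by positivity
    have h1 : (2:ℝ)^ℓ * t ≤ 2 * r^ν := by
      calc (2:ℝ)^ℓ * t ≤ (2:ℝ)^ℓ * 1 := mul_le_mul_of_nonneg_left ht.le h2ℓ0.le
        _ = (2:ℝ)^ℓ := mul_one _
        _ ≤ 2 * r^ν := h2ℓrν
    have h2 : 2 * r^ν ≤ r^μ := by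
      have hx : r^μ = r^(μ-ν) * r^ν := by
        rw [← Real.rpow_add hr0]; congr 1; ring
      rw [hx]
      exact mul_le_mul_of_nonneg_right hE2 (Real.rpow_pos_of_pos hr0 ν).le
    linarith
  have hr2n : r ≤ (2:ℝ)^n := by
    calc r = (2:ℝ)^lgr := (Real.rpow_logb two_pos (by norm_num) hr0).symm
      _ ≤ (2:ℝ)^((n:ℝ)) := Real.rpow_le_rpow_of_exponent_le one_le_two hn1
      _ = (2:ℝ)^n := Real.rpow_natCast 2 n
  -- exponent comparisons
  have hbn : ((b:ℝ)^n : ℝ) ≤ b * r ^ β' := by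
    have hbr : b ^ lgr = r ^ β' := by
      rw [Real.rpow_def_of_pos hb0, Real.rpow_def_of_pos hr0, hβ'def, hlgrdef, Real.logb]
      congr 1
      ring
    calc ((b:ℝ)^n : ℝ) = b ^ ((n:ℕ):ℝ) := (Real.rpow_natCast b n).symm
      _ ≤ b ^ (lgr + 1) := Real.rpow_le_rpow_of_exponent_le hb1.le hn2
      _ = b ^ lgr * b := by rw [Real.rpow_add hb0, Real.rpow_one]
      _ = b * r ^ β' := by rw [hbr]; ring
  have han : a ^ (-(j0:ℝ)) * r ^ (ν*α') ≤ ((a:ℝ) ^ (ℓ - j0 : ℕ) : ℝ) := by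
    have har : r ^ (ν*α') = a ^ (ν * lgr) := by
      rw [Real.rpow_def_of_pos hr0, Real.rpow_def_of_pos ha0, hα'def, hlgrdef, Real.logb]
      congr 1
      ring
    calc a ^ (-(j0:ℝ)) * r ^ (ν*α') = a ^ (ν * lgr - (j0:ℝ)) := by
          rw [har, ← Real.rpow_add ha0]
          congr 1
          ring
      _ ≤ a ^ ((ℓ:ℝ) - (j0:ℝ)) := Real.rpow_le_rpow_of_exponent_le ha1.le (by linarith)
      _ = a ^ ((((ℓ - j0:ℕ)):ℝ)) := by rw [Nat.cast_sub hj0ℓ]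
      _ = ((a:ℝ) ^ (ℓ - j0 : ℕ) : ℝ) := Real.rpow_natCast a _
  -- the key numerical inequality
  have hmid : η⁻¹ * (η*R0) ^ (b * r ^ β') < ε⁻¹ * c ^ (a ^ (-(j0:ℝ)) * r ^ (ν*α')) := by
    have hL0 : 0 < η⁻¹ * (η*R0) ^ (b * r ^ β') := by positivity
    have hR0' : 0 < ε⁻¹ * c ^ (a ^ (-(j0:ℝ)) * r ^ (ν*α')) := by positivity
    refine (Real.log_lt_log_iff hL0 hR0').mp ?_
    rw [Real.log_mul (by positivity : (0:ℝ) < η⁻¹).ne'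
        (Real.rpow_pos_of_pos hCb0 _).ne',
      Real.log_mul (by positivity : (0:ℝ) < ε⁻¹).ne'
        (Real.rpow_pos_of_pos hc0 _).ne',
      Real.log_rpow hCb0, Real.log_rpow hc0, Real.log_inv, Real.log_inv]
    have hexp1 : (b * r ^ β') * Real.log (η * R0) = Pc * r ^ β' := by
      rw [hPdef]; ring
    have hexp2 : (a ^ (-(j0:ℝ)) * r ^ (ν*α')) * Real.log c = Qc * r ^ (ν*α') := by
      rw [hQdef]; ring
    rw [hexp1, hexp2]
    linarith
  have hfin : η⁻¹ * ((η*R0) ^ ((b:ℝ)^n : ℝ)) < ε⁻¹ * (c ^ ((a:ℝ)^(ℓ-j0) : ℝ)) := by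
    have hstep1 : η⁻¹ * ((η*R0) ^ ((b:ℝ)^n : ℝ)) ≤ η⁻¹ * (η*R0) ^ (b * r ^ β') :=
      mul_le_mul_of_nonneg_left (Real.rpow_le_rpow_of_exponent_le hCb1 hbn) (by positivity)
    have hstep3 : ε⁻¹ * c ^ (a ^ (-(j0:ℝ)) * r ^ (ν*α')) ≤ ε⁻¹ * (c ^ ((a:ℝ)^(ℓ-j0) : ℝ)) :=
      mul_le_mul_of_nonneg_left (Real.rpow_le_rpow_of_exponent_le hc1.le han) (by positivity)
    exact hstep1.trans_lt (hmid.trans_le hstep3)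
  -- assemble
  refine ⟨ℓ, h1ℓ, ?_, hsepℓ ℓ, ?_⟩
  · rintro x ⟨x0, hx0, rfl⟩
    have hx0ann := hΓann hx0
    have hnorm : ‖((2:ℝ)^ℓ) • x0‖ = (2:ℝ)^ℓ * ‖x0‖ := by
      rw [norm_smul, Real.norm_eq_abs, abs_of_pos (by positivity)]
    have h2ℓ0 : (0:ℝ) < (2:ℝ)^ℓ := by positivity
    constructor
    · simp only [Set.mem_setOf_eq]
      rw [hnorm]
      calc r < (2:ℝ)^ℓ * s := hrlt
        _ ≤ (2:ℝ)^ℓ * ‖x0‖ := mul_le_mul_of_nonneg_left hx0ann.1 h2ℓ0.le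
    · rw [hnorm]
      calc (2:ℝ)^ℓ * ‖x0‖ ≤ (2:ℝ)^ℓ * t := mul_le_mul_of_nonneg_left hx0ann.2 h2ℓ0.le
        _ ≤ r^μ := hup2
  · rintro x ⟨x0, hx0, rfl⟩
    have hLx : ‖L (((2:ℝ)^ℓ) • x0)‖ = ‖f^[ℓ] (L x0)‖ := by rw [hiterL]
    have hlow2 := (hLOW (ℓ - j0) x0 hx0).2
    rw [Nat.add_sub_cancel' hj0ℓ] at hlow2
    calc maxMod L r ≤ η⁻¹ * ((η * R0) ^ ((b:ℝ)^n : ℝ)) := hmaxb n r hr0 hr2n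
      _ < ε⁻¹ * (c ^ ((a:ℝ)^(ℓ-j0) : ℝ)) := hfin
      _ ≤ ‖f^[ℓ] (L x0)‖ := hlow2
      _ = ‖L (((2:ℝ)^ℓ) • x0)‖ := hLx.symm
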